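/- Sequential weak lower semicontinuity of convex integrands with an a.e.-convergent parameter: Let Ω ⊂ ℝⁿ be a measurable set of finite Lebesgue measure, and let Φ : ℝ^m × ℝ^N → [0,∞) be continuous such that for each d ∈ ℝ^m the map v ↦ Φ(d,v) is convex and continuously differentiable, with the derivative D_vΦ(d,v) jointly continuous in (d,v). Let v^k, v : Ω → ℝ^N be integrable with v^k ⇀ v weakly in L¹(Ω,ℝ^N) and sup_k ∫_Ω |v^k| dx < ∞, and let d^k, d : Ω → ℝ^m be measurable with d^k → d pointwise almost everywhere. Then liminf_{k→∞} ∫_Ω Φ(d^k(x), v^k(x)) dx ≥ ∫_Ω Φ(d(x), v(x)) dx. -/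

import Mathlib

open MeasureTheory Filter Topology
open scoped ENNReal NNReal

/-- Gradient inequality for convex differentiable functions. -/
lemma convex_grad_ineq {E : Type*} [NormedAddCommGroup E] [NormedSpace ℝ E]
    {f : E → ℝ} (hconv : ConvexOn ℝ Set.univ f) (hdiff : Differentiable ℝ f)
    (u w : E) : f u + fderiv ℝ f u (w - u) ≤ f w := by
  rcases eq_or_ne w u with rfl | hne
  · simp
  · set L : ℝ →ᵃ[ℝ] E := AffineMap.lineMap u w with hL
    have hLt : ∀ t : ℝ, L t = u + t • (w - u) := by
      intro t
      simp [hL, AffineMap.lineMap_apply, smul_sub, sub_eq_add_neg]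
      abel
    have hg : ConvexOn ℝ Set.univ (f ∘ L) := by
      have := hconv.comp_affineMap L
      simpa using this
    have hder : HasDerivAt (f ∘ L) (fderiv ℝ f u (w - u)) 0 := by
      have h1 : HasDerivAt (fun t : ℝ => u + t • (w - u)) (w - u) 0 := by
        simpa using ((hasDerivAt_id (0:ℝ)).smul_const (w - u)).const_add u
      have h2 : HasFDerivAt f (fderiv ℝ f u) (u + (0:ℝ) • (w - u)) := by
        simpa using (hdiff u).hasFDerivAt
      have h3 := h2.comp_hasDerivAt 0 h1
      exact h3.congr_of_eventuallyEq (Eventually.of_forall fun t => by simp [hLt t])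
    have hslope := hg.le_slope_of_hasDerivAt (Set.mem_univ 0) (Set.mem_univ 1)
      one_pos hder
    have : slope (f ∘ L) 0 1 = f w - f u := by
      simp [slope, hLt, hL]
    rw [this] at hslope
    linarith

/-- `ofReal` of an integral is at most the `lintegral` of `ofReal`. -/
lemma ofReal_integral_le {α : Type*} [MeasurableSpace α] {μ : Measure α} {h : α → ℝ}
    (hint : Integrable h μ) :
    ENNReal.ofReal (∫ x, h x ∂μ) ≤ ∫⁻ x, ENNReal.ofReal (h x) ∂μ := by
  have h1 : ∫ x, h x ∂μ ≤ ∫ x, max (h x) 0 ∂μ :=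
    integral_mono hint hint.pos_part fun x => le_max_left _ _
  have h2 : ENNReal.ofReal (∫ x, max (h x) 0 ∂μ) = ∫⁻ x, ENNReal.ofReal (max (h x) 0) ∂μ :=
    ofReal_integral_eq_lintegral_ofReal hint.pos_part
      (Eventually.of_forall fun x => le_max_right _ _)
  have h3 : ∀ x, ENNReal.ofReal (max (h x) 0) = ENNReal.ofReal (h x) := by
    intro x
    rcases le_total (h x) 0 with hx | hx
    · rw [max_eq_right hx, ENNReal.ofReal_zero, ENNReal.ofReal_of_nonpos hx]
    · rw [max_eq_left hx]
  calc ENNReal.ofReal (∫ x, h x ∂μ) ≤ ENNReal.ofReal (∫ x, max (h x) 0 ∂μ) :=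
        ENNReal.ofReal_le_ofReal h1
    _ = ∫⁻ x, ENNReal.ofReal (max (h x) 0) ∂μ := h2
    _ = ∫⁻ x, ENNReal.ofReal (h x) ∂μ := by simp_rw [h3]

set_option maxHeartbeats 2000000 in
/-- Sequential weak lower semicontinuity of convex integrands with an
a.e.-convergent parameter: let `Ω ⊆ ℝⁿ` have finite measure, let
`Φ : ℝᵐ × ℝᴺ → [0,∞)` be continuous, convex and C¹ in its second argument with
jointly continuous derivative. If `vk ⇀ v` weakly in `L¹(Ω, ℝᴺ)` with uniformly
bounded `L¹` norms, and `dk → d` pointwise a.e., then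
`liminf_k ∫_Ω Φ(dk, vk) ≥ ∫_Ω Φ(d, v)` (integrals taken in `[0,∞]`). -/
theorem swlsc_convex_integrand_ae_parameter {n m N : ℕ}
    (Ω : Set (Fin n → ℝ)) (hΩ : MeasurableSet Ω) (hfin : volume Ω < ⊤)
    (Φ : EuclideanSpace ℝ (Fin m) × EuclideanSpace ℝ (Fin N) → ℝ)
    (hΦ0 : ∀ p, 0 ≤ Φ p) (hΦc : Continuous Φ)
    (hΦconv : ∀ d, ConvexOn ℝ Set.univ (fun w => Φ (d, w)))
    (hΦdiff : ∀ d, Differentiable ℝ (fun w => Φ (d, w)))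
    (hΦderiv : Continuous fun p : EuclideanSpace ℝ (Fin m) × EuclideanSpace ℝ (Fin N) =>
      fderiv ℝ (fun w => Φ (p.1, w)) p.2)
    (vk : ℕ → (Fin n → ℝ) → EuclideanSpace ℝ (Fin N))
    (v : (Fin n → ℝ) → EuclideanSpace ℝ (Fin N))
    (hvk : ∀ k, IntegrableOn (vk k) Ω) (hv : IntegrableOn v Ω)
    (hweak : ∀ φ : (Fin n → ℝ) → EuclideanSpace ℝ (Fin N), Measurable φ →
      (∃ C, ∀ x, ‖φ x‖ ≤ C) →
      Tendsto (fun k => ∫ x in Ω, (inner ℝ (vk k x) (φ x) : ℝ)) atTop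
        (𝓝 (∫ x in Ω, (inner ℝ (v x) (φ x) : ℝ))))
    (hbdd : ∃ C, ∀ k, (∫ x in Ω, ‖vk k x‖) ≤ C)
    (dk : ℕ → (Fin n → ℝ) → EuclideanSpace ℝ (Fin m))
    (d : (Fin n → ℝ) → EuclideanSpace ℝ (Fin m))
    (hdkm : ∀ k, Measurable (dk k)) (hdm : Measurable d)
    (hdconv : ∀ᵐ x ∂(volume.restrict Ω), Tendsto (fun k => dk k x) atTop (𝓝 (d x))) :
    ∫⁻ x in Ω, ENNReal.ofReal (Φ (d x, v x)) ≤
      atTop.liminf fun k => ∫⁻ x in Ω, ENNReal.ofReal (Φ (dk k x, vk k x)) := by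
  classical
  set μ := volume.restrict Ω with hμdef
  haveI : IsFiniteMeasure μ := ⟨by simpa [hμdef, Measure.restrict_apply_univ] using hfin⟩
  obtain ⟨C, hC⟩ := hbdd
  have hvmeas : AEStronglyMeasurable v μ := hv.aestronglyMeasurable
  set v' : (Fin n → ℝ) → EuclideanSpace ℝ (Fin N) := hvmeas.mk v with hv'def
  have hv'sm : StronglyMeasurable v' := hvmeas.stronglyMeasurable_mk
  have hv'm : Measurable v' := hv'sm.measurable
  have hvv' : v =ᵐ[μ] v' := hvmeas.ae_eq_mk
  have hv'int : Integrable v' μ := hv.congr hvv'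
  -- the gradient of Φ in the second variable
  set grad : EuclideanSpace ℝ (Fin m) × EuclideanSpace ℝ (Fin N) → EuclideanSpace ℝ (Fin N) :=
    fun p => (InnerProductSpace.toDual ℝ _).symm (fderiv ℝ (fun w => Φ (p.1, w)) p.2)
    with hgraddef
  have hgradc : Continuous grad :=
    (InnerProductSpace.toDual ℝ _).symm.continuous.comp hΦderiv
  have hkey : ∀ (a : EuclideanSpace ℝ (Fin m)) (u w : EuclideanSpace ℝ (Fin N)),
      Φ (a, u) + (inner ℝ (grad (a, u)) (w - u) : ℝ) ≤ Φ (a, w) := by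
    intro a u w
    have : (inner ℝ (grad (a, u)) (w - u) : ℝ)
        = fderiv ℝ (fun w => Φ (a, w)) u (w - u) := by
      rw [hgraddef]
      exact InnerProductSpace.toDual_symm_apply
    rw [this]
    exact convex_grad_ineq (hΦconv a) (hΦdiff a) u w
  have hG : Measurable fun x => ENNReal.ofReal (Φ (d x, v' x)) :=
    ENNReal.measurable_ofReal.comp (hΦc.measurable.comp (hdm.prodMk hv'm))
  have hgoal_eq : ∫⁻ x, ENNReal.ofReal (Φ (d x, v x)) ∂μ
      = ∫⁻ x, ENNReal.ofReal (Φ (d x, v' x)) ∂μ :=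
    lintegral_congr_ae (hvv'.mono fun x hx => by simp only [hx])
  rw [hgoal_eq]
  -- core claim
  have core : ∀ ε : ℝ, 0 < ε → ∃ F : Set (Fin n → ℝ), MeasurableSet F ∧
      μ Fᶜ ≤ ENNReal.ofReal ε ∧
      ∫⁻ x in F, ENNReal.ofReal (Φ (d x, v' x)) ∂μ ≤
        atTop.liminf fun k => ∫⁻ x, ENNReal.ofReal (Φ (dk k x, vk k x)) ∂μ := by
    intro ε hε
    -- choose a bound M for d and v'
    obtain ⟨M, hM⟩ : ∃ M : ℕ, μ {x | (M:ℝ) < ‖d x‖ + ‖v' x‖} ≤ ENNReal.ofReal (ε/2) := by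
      have hmeas : ∀ M : ℕ, MeasurableSet {x | (M:ℝ) < ‖d x‖ + ‖v' x‖} := fun M =>
        measurableSet_lt measurable_const (hdm.norm.add hv'm.norm)
      have hanti : Antitone fun M : ℕ => {x | (M:ℝ) < ‖d x‖ + ‖v' x‖} := by
        intro a b hab x hx
        exact lt_of_le_of_lt ((Nat.cast_le (α := ℝ)).mpr hab) hx
      have hempty : ⋂ M : ℕ, {x | (M:ℝ) < ‖d x‖ + ‖v' x‖} = ∅ := by
        ext x
        simp only [Set.mem_iInter, Set.mem_setOf_eq, Set.mem_empty_iff_false, iff_false,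
          not_forall, not_lt]
        obtain ⟨M, hM⟩ := exists_nat_gt (‖d x‖ + ‖v' x‖)
        exact ⟨M, hM.le⟩
      have htd := tendsto_measure_iInter_atTop
        (fun M => (hmeas M).nullMeasurableSet) hanti ⟨0, measure_ne_top μ _⟩
      rw [hempty, measure_empty] at htd
      have := htd.eventually_lt_const (show (0:ℝ≥0∞) < ENNReal.ofReal (ε/2) by
        simpa using half_pos hε)
      exact ⟨this.exists.choose, (this.exists.choose_spec).le⟩
    set E : Set (Fin n → ℝ) := {x | ‖d x‖ + ‖v' x‖ ≤ (M:ℝ)} with hEdef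
    have hEmeas : MeasurableSet E := measurableSet_le (hdm.norm.add hv'm.norm) measurable_const
    have hEc : μ Eᶜ ≤ ENNReal.ofReal (ε/2) := by
      convert hM using 2
      ext x
      simp [hEdef, not_le]
    -- Egorov
    obtain ⟨t, htmeas, htμ, htu⟩ := tendstoUniformlyOn_of_ae_tendsto'
      (fun k => (hdkm k).stronglyMeasurable) hdm.stronglyMeasurable hdconv (half_pos hε)
    set F := E ∩ tᶜ with hFdef
    have hF : MeasurableSet F := hEmeas.inter htmeas.compl
    have hFc : μ Fᶜ ≤ ENNReal.ofReal ε := by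
      have : Fᶜ = Eᶜ ∪ t := by rw [hFdef, Set.compl_inter, compl_compl]
      rw [this]
      calc μ (Eᶜ ∪ t) ≤ μ Eᶜ + μ t := measure_union_le _ _
        _ ≤ ENNReal.ofReal (ε/2) + ENNReal.ofReal (ε/2) := add_le_add hEc htμ
        _ = ENNReal.ofReal ε := by
            rw [← ENNReal.ofReal_add (by linarith) (by linarith)]
            norm_num
    have hdu : TendstoUniformlyOn dk d atTop F := htu.mono Set.inter_subset_right
    have hFd : ∀ x ∈ F, ‖d x‖ ≤ (M:ℝ) ∧ ‖v' x‖ ≤ (M:ℝ) := by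
      intro x hx
      have h1 : ‖d x‖ + ‖v' x‖ ≤ (M:ℝ) := hx.1
      constructor
      · nlinarith [norm_nonneg (v' x)]
      · nlinarith [norm_nonneg (d x)]
    -- compact set and bounds
    set K : Set (EuclideanSpace ℝ (Fin m) × EuclideanSpace ℝ (Fin N)) :=
      Metric.closedBall 0 ((M:ℝ)+1) ×ˢ Metric.closedBall 0 ((M:ℝ)+1) with hKdef
    have hK : IsCompact K :=
      (isCompact_closedBall _ _).prod (isCompact_closedBall _ _)
    have hmemK : ∀ (a : EuclideanSpace ℝ (Fin m)) (b : EuclideanSpace ℝ (Fin N)),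
        ‖a‖ ≤ (M:ℝ)+1 → ‖b‖ ≤ (M:ℝ)+1 → (a, b) ∈ K := by
      intro a b ha hb
      exact ⟨by simpa [Metric.mem_closedBall, dist_zero_right] using ha,
        by simpa [Metric.mem_closedBall, dist_zero_right] using hb⟩
    obtain ⟨B, hB⟩ := hK.exists_bound_of_continuousOn hΦc.continuousOn
    obtain ⟨C', hC'⟩ := hK.exists_bound_of_continuousOn hgradc.continuousOn
    have hUC : UniformContinuousOn grad K :=
      hK.uniformContinuousOn_of_continuous hgradc.continuousOn
    have hev1 : ∀ᶠ k in atTop, ∀ x ∈ F, dist (d x) (dk k x) < 1 :=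
      (Metric.tendstoUniformlyOn_iff.mp hdu) 1 one_pos
    -- pointwise membership facts
    have hmemF : ∀ x ∈ F, (d x, v' x) ∈ K := fun x hx =>
      hmemK _ _ (le_trans (hFd x hx).1 (by linarith)) (le_trans (hFd x hx).2 (by linarith))
    have hmemFk : ∀ k, (∀ x ∈ F, dist (d x) (dk k x) < 1) →
        ∀ x ∈ F, (dk k x, v' x) ∈ K := by
      intro k hk x hx
      refine hmemK _ _ ?_ (le_trans (hFd x hx).2 (by linarith))
      have hdist := (hk x hx).le
      rw [dist_comm, dist_eq_norm] at hdist
      have h1 : ‖dk k x‖ ≤ ‖dk k x - d x‖ + ‖d x‖ := by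
        calc ‖dk k x‖ = ‖(dk k x - d x) + d x‖ := by rw [sub_add_cancel]
          _ ≤ ‖dk k x - d x‖ + ‖d x‖ := norm_add_le _ _
      have h2 := (hFd x hx).1
      linarith
    -- the test function for weak convergence
    set ψ : (Fin n → ℝ) → EuclideanSpace ℝ (Fin N) := fun x => grad (d x, v' x) with hψdef
    have hψm : Measurable ψ := hgradc.measurable.comp (hdm.prodMk hv'm)
    set φ : (Fin n → ℝ) → EuclideanSpace ℝ (Fin N) := F.indicator ψ with hφdef
    have hφm : Measurable φ := hψm.indicator hF
    have hφb : ∀ x, ‖φ x‖ ≤ max C' 0 := by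
      intro x
      rw [hφdef]
      by_cases hx : x ∈ F
      · rw [Set.indicator_of_mem hx]
        exact le_max_of_le_left (hC' _ (hmemF x hx))
      · rw [Set.indicator_of_notMem hx]
        simp
    haveI : IsFiniteMeasure (μ.restrict F) :=
      ⟨by rw [Measure.restrict_apply_univ]; exact measure_lt_top μ F⟩
    -- integrability facts
    have hvkm : ∀ k, AEStronglyMeasurable (vk k) μ := fun k => (hvk k).aestronglyMeasurable
    have hdiff_int : ∀ k, Integrable (fun x => vk k x - v' x) μ := fun k => (hvk k).sub hv'int
    have hinner_int : ∀ (k : ℕ) (g : (Fin n → ℝ) → EuclideanSpace ℝ (Fin N)) (c : ℝ),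
        AEStronglyMeasurable g (μ.restrict F) → (∀ x ∈ F, ‖g x‖ ≤ c) →
        Integrable (fun x => (inner ℝ (vk k x - v' x) (g x) : ℝ)) (μ.restrict F) := by
      intro k g c hg hgb
      have hfm : AEStronglyMeasurable (fun x => vk k x - v' x) (μ.restrict F) :=
        ((hvkm k).sub hv'int.aestronglyMeasurable).restrict
      refine (((hdiff_int k).restrict (s := F)).norm.const_mul c).mono' (hfm.inner hg) ?_
      refine (ae_restrict_iff' hF).mpr (Eventually.of_forall fun x hx => ?_)
      calc ‖(inner ℝ (vk k x - v' x) (g x) : ℝ)‖ ≤ ‖vk k x - v' x‖ * ‖g x‖ :=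
            norm_inner_le_norm _ _
        _ ≤ ‖vk k x - v' x‖ * c := by
            have := norm_nonneg (vk k x - v' x)
            exact mul_le_mul_of_nonneg_left (hgb x hx) this
        _ = c * ‖vk k x - v' x‖ := mul_comm _ _
    have hΦdkint : ∀ (k : ℕ), (∀ x ∈ F, dist (d x) (dk k x) < 1) →
        Integrable (fun x => Φ (dk k x, v' x)) (μ.restrict F) := by
      intro k hk
      refine (integrable_const B).mono'
        ((hΦc.measurable.comp ((hdkm k).prodMk hv'm)).aestronglyMeasurable.restrict) ?_
      refine (ae_restrict_iff' hF).mpr (Eventually.of_forall fun x hx => ?_)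
      exact hB _ (hmemFk k hk x hx)
    have hΦdint : Integrable (fun x => Φ (d x, v' x)) (μ.restrict F) := by
      refine (integrable_const B).mono'
        ((hΦc.measurable.comp (hdm.prodMk hv'm)).aestronglyMeasurable.restrict) ?_
      exact (ae_restrict_iff' hF).mpr (Eventually.of_forall fun x hx => hB _ (hmemF x hx))
    -- the sequences
    set A : ℕ → ℝ := fun k => ∫ x in F, Φ (dk k x, v' x) ∂μ with hAdef
    set Bs : ℕ → ℝ := fun k => ∫ x in F, (inner ℝ (vk k x - v' x) (ψ x) : ℝ) ∂μ with hBsdef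
    set Cs : ℕ → ℝ := fun k =>
      ∫ x in F, (inner ℝ (vk k x - v' x) (grad (dk k x, v' x) - ψ x) : ℝ) ∂μ with hCsdef
    set Ik : ℕ → ℝ := fun k =>
      ∫ x in F, (Φ (dk k x, v' x) + (inner ℝ (vk k x - v' x) (grad (dk k x, v' x)) : ℝ)) ∂μ
      with hIkdef
    set I : ℝ := ∫ x in F, Φ (d x, v' x) ∂μ with hIdef
    -- measurability of grad (dk k x, v' x)
    have hgradkm : ∀ k, Measurable fun x => grad (dk k x, v' x) := fun k =>
      hgradc.measurable.comp ((hdkm k).prodMk hv'm)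
    -- step: eventually ofReal (Ik k) ≤ lintegral
    have hstep : ∀ᶠ k in atTop, ENNReal.ofReal (Ik k) ≤
        ∫⁻ x, ENNReal.ofReal (Φ (dk k x, vk k x)) ∂μ := by
      filter_upwards [hev1] with k hk
      have hint : Integrable
          (fun x => Φ (dk k x, v' x) + (inner ℝ (vk k x - v' x) (grad (dk k x, v' x)) : ℝ))
          (μ.restrict F) :=
        (hΦdkint k hk).add (hinner_int k _ C'
          ((hgradkm k).aestronglyMeasurable.restrict)
          (fun x hx => hC' _ (hmemFk k hk x hx)))
      calc ENNReal.ofReal (Ik k)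
          ≤ ∫⁻ x, ENNReal.ofReal
              (Φ (dk k x, v' x) + (inner ℝ (vk k x - v' x) (grad (dk k x, v' x)) : ℝ))
              ∂(μ.restrict F) := ofReal_integral_le hint
        _ ≤ ∫⁻ x, ENNReal.ofReal (Φ (dk k x, vk k x)) ∂(μ.restrict F) := by
            refine lintegral_mono fun x => ENNReal.ofReal_le_ofReal ?_
            have := hkey (dk k x) (v' x) (vk k x)
            rwa [real_inner_comm] at this
        _ ≤ ∫⁻ x, ENNReal.ofReal (Φ (dk k x, vk k x)) ∂μ :=
            lintegral_mono' Measure.restrict_le_self le_rfl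
    -- convergence of A
    have hA : Tendsto A atTop (𝓝 I) := by
      refine tendsto_integral_filter_of_dominated_convergence (fun _ => B)
        (Eventually.of_forall fun k =>
          (hΦc.measurable.comp ((hdkm k).prodMk hv'm)).aestronglyMeasurable.restrict) ?_
        (integrable_const B) ?_
      · filter_upwards [hev1] with k hk
        refine (ae_restrict_iff' hF).mpr (Eventually.of_forall fun x hx => ?_)
        exact hB _ (hmemFk k hk x hx)
      · have hconv' : ∀ᵐ x ∂μ.restrict F, Tendsto (fun k => dk k x) atTop (𝓝 (d x)) :=
          ae_restrict_of_ae hdconv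
        filter_upwards [hconv'] with x hx
        exact (hΦc.tendsto (d x, v' x)).comp (hx.prodMk_nhds tendsto_const_nhds)
    -- convergence of Bs
    have hBs : Tendsto Bs atTop (𝓝 0) := by
      have hφint : ∀ (u : (Fin n → ℝ) → EuclideanSpace ℝ (Fin N)), Integrable u μ →
          Integrable (fun x => (inner ℝ (u x) (φ x) : ℝ)) μ := by
        intro u hu
        refine (hu.norm.const_mul (max C' 0)).mono'
          (hu.aestronglyMeasurable.inner hφm.aestronglyMeasurable) ?_
        refine Eventually.of_forall fun x => ?_
        calc ‖(inner ℝ (u x) (φ x) : ℝ)‖ ≤ ‖u x‖ * ‖φ x‖ := norm_inner_le_norm _ _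
          _ ≤ ‖u x‖ * max C' 0 := mul_le_mul_of_nonneg_left (hφb x) (norm_nonneg _)
          _ = max C' 0 * ‖u x‖ := mul_comm _ _
      have hkeyid : ∀ (u : (Fin n → ℝ) → EuclideanSpace ℝ (Fin N)), Integrable u μ →
          (∫ x in F, (inner ℝ (u x - v' x) (ψ x) : ℝ) ∂μ)
            = (∫ x, (inner ℝ (u x) (φ x) : ℝ) ∂μ) - ∫ x, (inner ℝ (v' x) (φ x) : ℝ) ∂μ := by
        intro u hu
        calc ∫ x in F, (inner ℝ (u x - v' x) (ψ x) : ℝ) ∂μ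
            = ∫ x, F.indicator (fun x => (inner ℝ (u x - v' x) (ψ x) : ℝ)) x ∂μ :=
              (integral_indicator hF).symm
          _ = ∫ x, ((inner ℝ (u x) (φ x) : ℝ) - (inner ℝ (v' x) (φ x) : ℝ)) ∂μ := by
              refine integral_congr_ae (Eventually.of_forall fun x => ?_)
              by_cases hx : x ∈ F
              · simp only [hφdef, Set.indicator_of_mem hx, inner_sub_left]
              · simp [hφdef, Set.indicator_of_notMem hx]
          _ = (∫ x, (inner ℝ (u x) (φ x) : ℝ) ∂μ) - ∫ x, (inner ℝ (v' x) (φ x) : ℝ) ∂μ :=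
              integral_sub (hφint u hu) (hφint v' hv'int)
      have hweakφ := hweak φ hφm ⟨max C' 0, hφb⟩
      have hveq : (∫ x, (inner ℝ (v x) (φ x) : ℝ) ∂μ) = ∫ x, (inner ℝ (v' x) (φ x) : ℝ) ∂μ :=
        integral_congr_ae (hvv'.mono fun x hx => by simp only [hx])
      have hBs_eq : Bs = fun k =>
          (∫ x, (inner ℝ (vk k x) (φ x) : ℝ) ∂μ) - ∫ x, (inner ℝ (v' x) (φ x) : ℝ) ∂μ := by
        funext k; exact hkeyid (vk k) (hvk k)
      rw [hBs_eq]
      rw [hveq] at hweakφ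
      simpa using hweakφ.sub_const (∫ x, (inner ℝ (v' x) (φ x) : ℝ) ∂μ)
    -- convergence of Cs
    have hCs : Tendsto Cs atTop (𝓝 0) := by
      rw [NormedAddCommGroup.tendsto_nhds_zero]
      intro δ' hδ'
      have hv'n : (0:ℝ) ≤ ∫ x, ‖v' x‖ ∂μ := integral_nonneg fun x => norm_nonneg _
      have hC0 : (0:ℝ) ≤ C := le_trans (integral_nonneg fun x => norm_nonneg _) (hC 0)
      set D : ℝ := C + (∫ x, ‖v' x‖ ∂μ) + 1 with hDdef
      have hD : 0 < D := by positivity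
      obtain ⟨η, hη, hηspec⟩ := (Metric.uniformContinuousOn_iff.mp hUC) (δ'/D) (by positivity)
      filter_upwards [hev1, (Metric.tendstoUniformlyOn_iff.mp hdu) η hη] with k hk1 hkη
      have hgb : ∀ x ∈ F, ‖grad (dk k x, v' x) - ψ x‖ ≤ δ'/D := by
        intro x hx
        have hp : (dk k x, v' x) ∈ K := hmemFk k hk1 x hx
        have hq : (d x, v' x) ∈ K := hmemF x hx
        have hdist : dist ((dk k x, v' x)) ((d x, v' x)) < η := by
          rw [Prod.dist_eq]
          simp only [dist_self]
          exact max_lt (by rw [dist_comm]; exact hkη x hx) hη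
        have hlt := hηspec _ hp _ hq hdist
        rw [dist_eq_norm] at hlt
        exact le_of_lt hlt
      have hb1 : ‖Cs k‖ ≤ ∫ x in F, (δ'/D) * ‖vk k x - v' x‖ ∂μ := by
        refine norm_integral_le_of_norm_le
          (((hdiff_int k).restrict (s := F)).norm.const_mul _) ?_
        refine (ae_restrict_iff' hF).mpr (Eventually.of_forall fun x hx => ?_)
        calc ‖(inner ℝ (vk k x - v' x) (grad (dk k x, v' x) - ψ x) : ℝ)‖
            ≤ ‖vk k x - v' x‖ * ‖grad (dk k x, v' x) - ψ x‖ := norm_inner_le_norm _ _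
          _ ≤ ‖vk k x - v' x‖ * (δ'/D) :=
              mul_le_mul_of_nonneg_left (hgb x hx) (norm_nonneg _)
          _ = (δ'/D) * ‖vk k x - v' x‖ := mul_comm _ _
      have hb2 : (∫ x in F, (δ'/D) * ‖vk k x - v' x‖ ∂μ)
          = (δ'/D) * ∫ x in F, ‖vk k x - v' x‖ ∂μ := integral_const_mul _ _
      have hb3 : (∫ x in F, ‖vk k x - v' x‖ ∂μ) ≤ ∫ x, ‖vk k x - v' x‖ ∂μ :=
        integral_mono_measure Measure.restrict_le_self
          (Eventually.of_forall fun x => norm_nonneg _) (hdiff_int k).norm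
      have hb4 : (∫ x, ‖vk k x - v' x‖ ∂μ) ≤ C + ∫ x, ‖v' x‖ ∂μ := by
        calc ∫ x, ‖vk k x - v' x‖ ∂μ ≤ ∫ x, (‖vk k x‖ + ‖v' x‖) ∂μ :=
            integral_mono (hdiff_int k).norm ((hvk k).norm.add hv'int.norm)
              fun x => norm_sub_le _ _
          _ = (∫ x, ‖vk k x‖ ∂μ) + ∫ x, ‖v' x‖ ∂μ := integral_add (hvk k).norm hv'int.norm
          _ ≤ C + ∫ x, ‖v' x‖ ∂μ := add_le_add_left (hC k) _
      have hfinal : ‖Cs k‖ ≤ (δ'/D) * (C + ∫ x, ‖v' x‖ ∂μ) := by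
        refine le_trans hb1 ?_
        rw [hb2]
        exact mul_le_mul_of_nonneg_left (le_trans hb3 hb4) (by positivity)
      have hlast : (δ'/D) * (C + ∫ x, ‖v' x‖ ∂μ) < δ' := by
        rw [div_mul_eq_mul_div, div_lt_iff₀ hD]
        nlinarith
      exact lt_of_le_of_lt hfinal hlast
    -- Ik = A + Bs + Cs eventually, hence converges to I
    have hIk : Tendsto Ik atTop (𝓝 I) := by
      have heq : ∀ᶠ k in atTop, Ik k = A k + (Bs k + Cs k) := by
        filter_upwards [hev1] with k hk
        have hint1 : Integrable (fun x => Φ (dk k x, v' x)) (μ.restrict F) := hΦdkint k hk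
        have hint2 : Integrable (fun x => (inner ℝ (vk k x - v' x) (ψ x) : ℝ)) (μ.restrict F) :=
          hinner_int k ψ C' (hψm.aestronglyMeasurable.restrict)
            fun x hx => hC' _ (hmemF x hx)
        have hint3 : Integrable
            (fun x => (inner ℝ (vk k x - v' x) (grad (dk k x, v' x) - ψ x) : ℝ))
            (μ.restrict F) :=
          hinner_int k _ (C' + C') (((hgradkm k).sub hψm).aestronglyMeasurable.restrict)
            fun x hx => le_trans (norm_sub_le _ _)
              (add_le_add (hC' _ (hmemFk k hk x hx)) (hC' _ (hmemF x hx)))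
        have hsplit : ∀ x : Fin n → ℝ, (inner ℝ (vk k x - v' x) (grad (dk k x, v' x)) : ℝ)
            = (inner ℝ (vk k x - v' x) (ψ x) : ℝ)
              + (inner ℝ (vk k x - v' x) (grad (dk k x, v' x) - ψ x) : ℝ) := by
          intro x
          rw [← inner_add_right]
          congr 1
          abel
        calc Ik k = ∫ x in F, (Φ (dk k x, v' x) + ((inner ℝ (vk k x - v' x) (ψ x) : ℝ)
              + (inner ℝ (vk k x - v' x) (grad (dk k x, v' x) - ψ x) : ℝ))) ∂μ :=
              integral_congr_ae (Eventually.of_forall fun x => by simp only [hsplit x])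
          _ = A k + (Bs k + Cs k) := by
              have hint23 : Integrable (fun x => (inner ℝ (vk k x - v' x) (ψ x) : ℝ)
                  + (inner ℝ (vk k x - v' x) (grad (dk k x, v' x) - ψ x) : ℝ))
                  (μ.restrict F) := hint2.add hint3
              rw [integral_add hint1 hint23, integral_add hint2 hint3]
      have hlim := hA.add (hBs.add hCs)
      rw [show I + ((0:ℝ) + 0) = I by ring] at hlim
      exact hlim.congr' (heq.mono fun k hk => hk.symm)
    refine ⟨F, hF, hFc, ?_⟩
    have hofReal : Tendsto (fun k => ENNReal.ofReal (Ik k)) atTop (𝓝 (ENNReal.ofReal I)) :=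
      (ENNReal.continuous_ofReal.tendsto _).comp hIk
    calc ∫⁻ x in F, ENNReal.ofReal (Φ (d x, v' x)) ∂μ
        = ENNReal.ofReal I :=
          (ofReal_integral_eq_lintegral_ofReal hΦdint
            (Eventually.of_forall fun x => hΦ0 _)).symm
      _ = atTop.liminf fun k => ENNReal.ofReal (Ik k) := hofReal.liminf_eq.symm
      _ ≤ atTop.liminf fun k => ∫⁻ x, ENNReal.ofReal (Φ (dk k x, vk k x)) ∂μ :=
          liminf_le_liminf hstep
  -- assembly
  set LIM := atTop.liminf fun k => ∫⁻ x, ENNReal.ofReal (Φ (dk k x, vk k x)) ∂μ with hLIM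
  have hmain : ∀ L : ℕ, ∫⁻ x, min (ENNReal.ofReal (Φ (d x, v' x))) L ∂μ ≤ LIM := by
    intro L
    apply ENNReal.le_of_forall_pos_le_add
    intro δ hδ _
    obtain ⟨F, hF, hFc, hFle⟩ := core ((δ:ℝ) / (L+1)) (by positivity)
    have hmul : (L : ℝ≥0∞) * ENNReal.ofReal ((δ:ℝ)/(L+1)) ≤ (δ : ℝ≥0∞) := by
      rw [show ((L:ℝ≥0∞)) = ENNReal.ofReal (L:ℝ) by simp,
        ← ENNReal.ofReal_mul (by positivity), ← ENNReal.ofReal_coe_nnreal]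
      apply ENNReal.ofReal_le_ofReal
      have hL1 : (0:ℝ) < (L:ℝ) + 1 := by positivity
      rw [mul_div_assoc', div_le_iff₀ hL1]
      nlinarith [δ.coe_nonneg]
    calc ∫⁻ x, min (ENNReal.ofReal (Φ (d x, v' x))) L ∂μ
        = (∫⁻ x in F, min (ENNReal.ofReal (Φ (d x, v' x))) L ∂μ)
          + ∫⁻ x in Fᶜ, min (ENNReal.ofReal (Φ (d x, v' x))) L ∂μ :=
          (lintegral_add_compl _ hF).symm
      _ ≤ (∫⁻ x in F, ENNReal.ofReal (Φ (d x, v' x)) ∂μ) + (L : ℝ≥0∞) * μ Fᶜ := by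
          refine add_le_add (lintegral_mono fun x => min_le_left _ _) ?_
          calc ∫⁻ x in Fᶜ, min (ENNReal.ofReal (Φ (d x, v' x))) L ∂μ
              ≤ ∫⁻ _ in Fᶜ, (L:ℝ≥0∞) ∂μ := lintegral_mono fun x => min_le_right _ _
            _ = (L:ℝ≥0∞) * μ Fᶜ := by rw [setLIntegral_const]
      _ ≤ LIM + (L:ℝ≥0∞) * ENNReal.ofReal ((δ:ℝ)/(L+1)) :=
          add_le_add hFle (mul_le_mul_right hFc _)
      _ ≤ LIM + δ := add_le_add_right hmul LIM
  have hsup : ∀ x, ⨆ L : ℕ, min (ENNReal.ofReal (Φ (d x, v' x))) (L:ℝ≥0∞)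
      = ENNReal.ofReal (Φ (d x, v' x)) := by
    intro x
    apply le_antisymm (iSup_le fun L => min_le_left _ _)
    obtain ⟨L, hL⟩ := ENNReal.exists_nat_gt (show ENNReal.ofReal (Φ (d x, v' x)) ≠ ⊤ from
      ENNReal.ofReal_ne_top)
    exact le_iSup_of_le L (le_min le_rfl hL.le)
  calc ∫⁻ x, ENNReal.ofReal (Φ (d x, v' x)) ∂μ
      = ∫⁻ x, ⨆ L : ℕ, min (ENNReal.ofReal (Φ (d x, v' x))) (L:ℝ≥0∞) ∂μ :=
        lintegral_congr fun x => (hsup x).symm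
    _ = ⨆ L : ℕ, ∫⁻ x, min (ENNReal.ofReal (Φ (d x, v' x))) (L:ℝ≥0∞) ∂μ :=
        lintegral_iSup (fun L => hG.min measurable_const)
          (fun a b hab x => min_le_min le_rfl (by exact_mod_cast Nat.cast_le.mpr hab))
    _ ≤ LIM := iSup_le hmain
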